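/- Let F, G be S-diagrams in a cocomplete symmetric monoidal closed category M with the same object set X, let σ₁, σ₂ : F ⇉ G be parallel morphisms of S-diagrams, and let L : U(G) → E be their coequalizer computed in K_X (levelwise). Suppose there exists a splitting p : U(G) → U(F) in K_X with σ₁ ∘ p = σ₂ ∘ p = id_{U(G)}. Then E carries a unique structure of S-diagram making L a morphism of S-diagrams, and L : G → E is the coequalizer of (σ₁, σ₂) in M_S(X); moreover U preserves this coequalizer. -/

import Mathlib

universe w v u

open CategoryTheory Limits MonoidalCategory

/-- A chain from `A` to `B` in the indiscrete category `X̄` on the set `X`: a finite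
sequence of vertices `A = v 0, v 1, …, v n = B` of positive length `n` (normalized so
that `v k = B` for all `k ≥ n`).  These are the 1-morphisms of the semi-2-category
`S_X̄`. -/
@[ext]
structure Chain (X : Type w) (A B : X) : Type w where
  n : ℕ
  pos : 0 < n
  v : ℕ → X
  v0 : v 0 = A
  vend : ∀ k, n ≤ k → v k = B

namespace Chain

variable {X : Type w}

/-- Composition (concatenation) of chains; this is the horizontal composition of
1-morphisms in `S_X̄`. -/
def comp {A B C : X} (s : Chain X A B) (t : Chain X B C) : Chain X A C where
  n := s.n + t.n
  pos := by have := s.pos; omega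
  v := fun k => if k < s.n then s.v k else t.v (k - s.n)
  v0 := by (try dsimp only); rw [if_pos s.pos]; exact s.v0
  vend := fun k hk => by
    (try dsimp only)
    rw [if_neg (by have := t.pos; omega)]
    exact t.vend _ (by omega)

@[simp] theorem comp_n {A B C : X} (s : Chain X A B) (t : Chain X B C) :
    (s.comp t).n = s.n + t.n := rfl

theorem comp_v {A B C : X} (s : Chain X A B) (t : Chain X B C) (k : ℕ) :
    (s.comp t).v k = if k < s.n then s.v k else t.v (k - s.n) := rfl

theorem comp_assoc {A B C D : X} (s : Chain X A B) (t : Chain X B C) (u : Chain X C D) :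
    (s.comp t).comp u = s.comp (t.comp u) := by
  ext
  · simp only [comp_n]; omega
  · simp only [comp_v, comp_n]
    rename_i k
    by_cases h1 : k < s.n <;> by_cases h2 : k < s.n + t.n <;> by_cases h3 : k - s.n < t.n <;>
      simp only [h1, h2, h3, ↓reduceIte] <;> first | rfl | (congr 1 <;> omega) | (exfalso; omega)

end Chain

/-- A 2-morphism `t ⟶ s` of `S_X̄(A,B)`: a monotone surjection of index sets (normalized
beyond `t.n`) compatible with the vertices, i.e. `t.v i = s.v (f i)`; it deletes letters
of the chain `t` to produce `s`. -/
structure ChainHom {X : Type w} {A B : X} (t s : Chain X A B) : Type where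
  f : ℕ → ℕ
  mono : Monotone f
  bound : ∀ k, t.n ≤ k → f k = s.n
  surj : ∀ j, j ≤ s.n → ∃ i, i ≤ t.n ∧ f i = j
  compat : ∀ i, t.v i = s.v (f i)

namespace ChainHom

variable {X : Type w}

/-- The identity 2-morphism on a chain. -/
def id {A B : X} (t : Chain X A B) : ChainHom t t where
  f := fun k => min k t.n
  mono := by intro a b h; (try dsimp only); omega
  bound := by intro k hk; (try dsimp only); omega
  surj := fun j hj => ⟨j, hj, by (try dsimp only); omega⟩
  compat := fun i => by
    (try dsimp only)
    rcases le_or_gt t.n i with h | h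
    · rw [t.vend i h, show min i t.n = t.n by omega, t.vend t.n le_rfl]
    · rw [show min i t.n = i by omega]

/-- Vertical composition of 2-morphisms of `S_X̄(A,B)`. -/
def comp {A B : X} {t s r : Chain X A B} (u : ChainHom t s) (w : ChainHom s r) :
    ChainHom t r where
  f := fun k => w.f (u.f k)
  mono := fun _ _ h => w.mono (u.mono h)
  bound := fun k hk => by (try dsimp only); rw [u.bound k hk, w.bound s.n le_rfl]
  surj := fun j hj => by
    obtain ⟨i, hi, hfi⟩ := w.surj j hj
    obtain ⟨i', hi', hfi'⟩ := u.surj i hi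
    exact ⟨i', hi', by (try dsimp only); rw [hfi', hfi]⟩
  compat := fun i => by (try dsimp only); rw [u.compat i, w.compat (u.f i)]

/-- Horizontal composition of 2-morphisms, over the composition of chains. -/
def hcomp {A B C : X} {t t' : Chain X A B} {s s' : Chain X B C}
    (u : ChainHom t t') (w : ChainHom s s') : ChainHom (t.comp s) (t'.comp s') where
  f := fun k => if k < t.n then u.f k else t'.n + w.f (k - t.n)
  mono := by
    intro a b hab
    (try dsimp only)
    split_ifs with h1 h2
    · exact u.mono hab
    · have h3 : u.f a ≤ u.f t.n := u.mono (by omega)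
      have h4 : u.f t.n = t'.n := u.bound t.n le_rfl
      omega
    · omega
    · have := w.mono (show a - t.n ≤ b - t.n by omega)
      omega
  bound := by
    intro k hk
    have hk' : t.n + s.n ≤ k := hk
    (try dsimp only)
    rw [if_neg (by omega), w.bound (k - t.n) (by omega)]
    rfl
  surj := by
    intro j hj
    have hj' : j ≤ t'.n + s'.n := hj
    rcases lt_or_ge j t'.n with h | h
    · obtain ⟨i, hi, hfi⟩ := u.surj j (by omega)
      have hilt : i < t.n := by
        by_contra hcon
        have h5 : u.f i = t'.n := u.bound i (by omega)
        omega
      refine ⟨i, ?_, ?_⟩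
      · have h6 : (t.comp s).n = t.n + s.n := rfl
        omega
      · (try dsimp only); rw [if_pos hilt]; exact hfi
    · obtain ⟨i, hi, hfi⟩ := w.surj (j - t'.n) (by omega)
      refine ⟨t.n + i, ?_, ?_⟩
      · have h6 : (t.comp s).n = t.n + s.n := rfl
        omega
      · (try dsimp only)
        rw [if_neg (by omega), show t.n + i - t.n = i by omega, hfi]
        omega
  compat := by
    intro i
    (try dsimp only)
    by_cases h1 : i < t.n
    · rw [if_pos h1]
      have hL : (t.comp s).v i = t.v i := by rw [Chain.comp_v, if_pos h1]
      have h2 : u.f i ≤ t'.n := by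
        have h3 := u.mono (show i ≤ t.n by omega)
        have h4 := u.bound t.n le_rfl
        omega
      rcases lt_or_eq_of_le h2 with h3 | h3
      · have hR : (t'.comp s').v (u.f i) = t'.v (u.f i) := by
          rw [Chain.comp_v, if_pos h3]
        rw [hL, hR]; exact u.compat i
      · have hR : (t'.comp s').v (u.f i) = s'.v (u.f i - t'.n) := by
          rw [Chain.comp_v, if_neg (by omega)]
        rw [hL, hR, u.compat i, h3, t'.vend t'.n le_rfl,
          show t'.n - t'.n = 0 by omega, s'.v0]
    · rw [if_neg h1]
      have hL : (t.comp s).v i = s.v (i - t.n) := by rw [Chain.comp_v, if_neg h1]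
      have hR : (t'.comp s').v (t'.n + w.f (i - t.n)) = s'.v (w.f (i - t.n)) := by
        rw [Chain.comp_v, if_neg (by omega)]
        congr 1
        omega
      rw [hL, hR]
      exact w.compat (i - t.n)

end ChainHom

variable (M : Type u) [Category.{v} M]

/-- An object of `K_X = ∏_{(A,B) ∈ X²} Fun(S_X̄(A,B)ᵒᵖ, M)`: a family of contravariant
functors on the categories of chains.  (This is the underlying data of a pre-Co-Segal
category, without laxity maps.) -/
structure KObj (X : Type w) where
  F : ∀ {A B : X}, Chain X A B → M
  map : ∀ {A B : X} {t s : Chain X A B}, ChainHom t s → (F s ⟶ F t)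
  map_id : ∀ {A B : X} (t : Chain X A B), map (ChainHom.id t) = 𝟙 (F t)
  map_comp : ∀ {A B : X} {t s r : Chain X A B} (u : ChainHom t s) (w : ChainHom s r),
    map (u.comp w) = map w ≫ map u

variable {M}

/-- A morphism of `K_X`: a levelwise natural transformation. -/
structure KHom {X : Type w} (P Q : KObj M X) where
  app : ∀ {A B : X} (t : Chain X A B), P.F t ⟶ Q.F t
  naturality : ∀ {A B : X} {t s : Chain X A B} (u : ChainHom t s),
    P.map u ≫ app t = app s ≫ Q.map u

theorem KHom.ext' {X : Type w} {P Q : KObj M X} {f g : KHom P Q}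
    (h : ∀ {A B : X} (t : Chain X A B), f.app t = g.app t) : f = g := by
  obtain ⟨fapp, fnat⟩ := f
  obtain ⟨gapp, gnat⟩ := g
  have he : @fapp = @gapp := by
    funext A B t
    exact h t
  subst he
  rfl

instance KObj.category {X : Type w} : Category (KObj M X) where
  Hom := KHom
  id P := ⟨fun t => 𝟙 (P.F t), fun u => by simp⟩
  comp f g := ⟨fun t => f.app t ≫ g.app t, fun u => by
    rw [← Category.assoc, f.naturality u, Category.assoc, g.naturality u,
      ← Category.assoc]⟩
  id_comp f := KHom.ext' fun t => Category.id_comp (f.app t)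
  comp_id f := KHom.ext' fun t => Category.comp_id (f.app t)
  assoc f g h := KHom.ext' fun t => Category.assoc _ _ _

variable (M) [MonoidalCategory M]

/-- A pre-Co-Segal category with object set `X` (an object of `M_S(X)`): a lax diagram
`(S_X̄)^{2-op} ⥤ M`, i.e. a family of functors on chains together with laxity maps
`F s ⊗ F t ⟶ F (s ⊗ t)` which are natural and associative-coherent. -/
structure SObj (X : Type w) extends KObj M X where
  lax : ∀ {A B C : X} (s : Chain X A B) (t : Chain X B C), F s ⊗ F t ⟶ F (s.comp t)
  lax_natural : ∀ {A B C : X} {s s' : Chain X A B} {t t' : Chain X B C}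
    (u : ChainHom s s') (w : ChainHom t t'),
    (map u ⊗ₘ map w) ≫ lax s t = lax s' t' ≫ map (u.hcomp w)
  lax_assoc : ∀ {A B C D : X} (s : Chain X A B) (t : Chain X B C) (r : Chain X C D),
    (lax s t ▷ F r) ≫ lax (s.comp t) r =
      (α_ (F s) (F t) (F r)).hom ≫ (F s ◁ lax t r) ≫ lax s (t.comp r) ≫
        eqToHom (by rw [Chain.comp_assoc])

variable {M}

/-- A morphism of pre-Co-Segal categories over a fixed object set: a levelwise natural
transformation compatible with the laxity maps (an icon). -/
structure SHom {X : Type w} (P Q : SObj M X) where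
  app : ∀ {A B : X} (t : Chain X A B), P.F t ⟶ Q.F t
  naturality : ∀ {A B : X} {t s : Chain X A B} (u : ChainHom t s),
    P.map u ≫ app t = app s ≫ Q.map u
  monoidal : ∀ {A B C : X} (s : Chain X A B) (t : Chain X B C),
    (app s ⊗ₘ app t) ≫ Q.lax s t = P.lax s t ≫ app (s.comp t)

theorem SHom.ext' {X : Type w} {P Q : SObj M X} {f g : SHom P Q}
    (h : ∀ {A B : X} (t : Chain X A B), f.app t = g.app t) : f = g := by
  obtain ⟨fapp, fnat, fmon⟩ := f
  obtain ⟨gapp, gnat, gmon⟩ := g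
  have he : @fapp = @gapp := by
    funext A B t
    exact h t
  subst he
  rfl

instance SObj.category {X : Type w} : Category (SObj M X) where
  Hom := SHom
  id P := ⟨fun t => 𝟙 (P.F t), fun u => by simp, fun s t => by
    simp [MonoidalCategory.id_tensorHom_id]⟩
  comp f g := ⟨fun t => f.app t ≫ g.app t, fun u => by
      rw [← Category.assoc, f.naturality u, Category.assoc, g.naturality u,
        ← Category.assoc],
    fun s t => by
      rw [← MonoidalCategory.tensorHom_comp_tensorHom, Category.assoc, g.monoidal s t,
        ← Category.assoc, f.monoidal s t, Category.assoc]⟩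
  id_comp f := SHom.ext' fun t => Category.id_comp (f.app t)
  comp_id f := SHom.ext' fun t => Category.comp_id (f.app t)
  assoc f g h := SHom.ext' fun t => Category.assoc _ _ _

variable (M)

/-- The forgetful functor `U : M_S(X) ⥤ K_X` which forgets the laxity maps of a
pre-Co-Segal category. -/
def forgetLax (X : Type w) : SObj M X ⥤ KObj M X where
  obj P := P.toKObj
  map f := ⟨f.app, f.naturality⟩
  map_id _ := KHom.ext' fun _ => rfl
  map_comp _ _ := KHom.ext' fun _ => rfl

variable {M}

variable (M) in
/-- The structure of laxity maps on an object `E` of `K_X`, making it a pre-Co-Segal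
category (an `S`-diagram). -/
structure LaxExt {X : Type w} (E : KObj M X) where
  lax : ∀ {A B C : X} (s : Chain X A B) (t : Chain X B C),
    E.F s ⊗ E.F t ⟶ E.F (s.comp t)
  lax_natural : ∀ {A B C : X} {s s' : Chain X A B} {t t' : Chain X B C}
    (u : ChainHom s s') (w : ChainHom t t'),
    (E.map u ⊗ₘ E.map w) ≫ lax s t = lax s' t' ≫ E.map (u.hcomp w)
  lax_assoc : ∀ {A B C D : X} (s : Chain X A B) (t : Chain X B C) (r : Chain X C D),
    (lax s t ▷ E.F r) ≫ lax (s.comp t) r =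
      (α_ (E.F s) (E.F t) (E.F r)).hom ≫ (E.F s ◁ lax t r) ≫ lax s (t.comp r) ≫
        eqToHom (by rw [Chain.comp_assoc])

/-- The pre-Co-Segal category obtained from an object of `K_X` equipped with a laxity
structure. -/
def LaxExt.toSObj {X : Type w} {E : KObj M X} (str : LaxExt M E) : SObj M X :=
  { E with lax := str.lax, lax_natural := str.lax_natural, lax_assoc := str.lax_assoc }

/-- `L` is compatible with the laxity maps of `G` and of the structure `str` on `E`,
i.e. it is (the underlying map of) a morphism of `S`-diagrams `G ⟶ (E, str)`. -/
def IsLaxCompat {X : Type w} {G : SObj M X} {E : KObj M X} (str : LaxExt M E)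
    (L : (forgetLax M X).obj G ⟶ E) : Prop :=
  ∀ {A B C : X} (s : Chain X A B) (t : Chain X B C),
    (L.app s ⊗ₘ L.app t) ≫ str.lax s t = G.lax s t ≫ L.app (s.comp t)

section SplitPairAux

open MonoidalCategory

variable {M : Type u} [Category.{v} M]

theorem KHom.congr_app {X : Type w} {P Q : KObj M X} {a b : KHom P Q} (h : a = b)
    {A B : X} (t : Chain X A B) : a.app t = b.app t := by rw [h]

theorem SHom.congr_app [MonoidalCategory M] {X : Type w} {P Q : SObj M X} {a b : SHom P Q}
    (h : a = b) {A B : X} (t : Chain X A B) : a.app t = b.app t := by rw [h]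

theorem LaxExt.ext_lax [MonoidalCategory M] {X : Type w} {E : KObj M X} {a b : LaxExt M E}
    (h : ∀ {A B C : X} (s : Chain X A B) (t : Chain X B C), a.lax s t = b.lax s t) :
    a = b := by
  obtain ⟨al, an, aa⟩ := a
  obtain ⟨bl, bn, ba⟩ := b
  have he : @al = @bl := by
    funext A B C s t
    exact h s t
  subst he
  rfl

theorem KHom.app_eqToHom {X : Type w} {P Q : KObj M X} (L : KHom P Q)
    {A B : X} {r₁ r₂ : Chain X A B} (h : r₁ = r₂) :
    L.app r₁ ≫ eqToHom (show Q.F r₁ = Q.F r₂ by rw [h]) =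
      eqToHom (show P.F r₁ = P.F r₂ by rw [h]) ≫ L.app r₂ := by
  subst h; simp

variable [HasColimits M]

/-- The levelwise coequalizer of a parallel pair in `K_X`. -/
noncomputable def KObj.coeqObj {X : Type w} {P Q : KObj M X} (f g : KHom P Q) :
    KObj M X where
  F := fun {A B} t => coequalizer (f.app t) (g.app t)
  map := fun {A B t s} u =>
    coequalizer.desc (Q.map u ≫ coequalizer.π (f.app t) (g.app t))
      (by rw [← Category.assoc, ← f.naturality u, Category.assoc,
            coequalizer.condition, ← Category.assoc, g.naturality u, Category.assoc])
  map_id := fun {A B} t => by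
    apply coequalizer.hom_ext
    simp [Q.map_id]
  map_comp := fun {A B t s r} u w => by
    apply coequalizer.hom_ext
    simp [Q.map_comp]

attribute [reducible] KObj.coeqObj

/-- The levelwise coequalizer projection in `K_X`. -/
noncomputable def KObj.coeqπ {X : Type w} {P Q : KObj M X} (f g : KHom P Q) :
    Q ⟶ KObj.coeqObj f g where
  app := fun {A B} t => coequalizer.π (f.app t) (g.app t)
  naturality := fun {A B t s} u => (coequalizer.π_desc _ _).symm

/-- The levelwise coequalizer is a coequalizer in `K_X`. -/
noncomputable def KObj.coeqIsColimit {X : Type w} {P Q : KObj M X} (f g : P ⟶ Q)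
    (hw₀ : f ≫ KObj.coeqπ f g = g ≫ KObj.coeqπ f g) :
    IsColimit (Cofork.ofπ (KObj.coeqπ f g) hw₀) := by
  refine Cofork.IsColimit.mk' _ fun c => ?_
  have ccond : ∀ {A B : X} (t : Chain X A B),
      f.app t ≫ c.π.app t = g.app t ≫ c.π.app t := fun t =>
    KHom.congr_app c.condition t
  refine ⟨⟨fun {A B} t => coequalizer.desc (c.π.app t) (ccond t),
      fun {A B t s} u => ?_⟩, ?_, ?_⟩
  · apply coequalizer.hom_ext
    have h1 : coequalizer.π (f.app s) (g.app s) ≫ (KObj.coeqObj f g).map u =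
        Q.map u ≫ coequalizer.π (f.app t) (g.app t) := coequalizer.π_desc _ _
    dsimp only [Cofork.ofπ_pt]
    rw [← Category.assoc, h1, Category.assoc, coequalizer.π_desc, ← Category.assoc,
      coequalizer.π_desc]
    exact c.π.naturality u
  · exact KHom.ext' fun t => coequalizer.π_desc _ _
  · intro m hm
    exact KHom.ext' fun t => coequalizer.hom_ext
      (by rw [coequalizer.π_desc]; exact KHom.congr_app hm t)

/-- A coequalizer in `K_X` is a levelwise coequalizer in `M`. -/
noncomputable def KObj.levelwiseIsColimit {X : Type w} {P Q : KObj M X} {f g : P ⟶ Q}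
    {E : KObj M X} {L : Q ⟶ E} {hw : f ≫ L = g ≫ L}
    (hL : IsColimit (Cofork.ofπ L hw)) {A B : X} (r : Chain X A B)
    (hwr : f.app r ≫ L.app r = g.app r ≫ L.app r) :
    IsColimit (Cofork.ofπ (L.app r) hwr) := by
  have hw₀ : f ≫ KObj.coeqπ f g = g ≫ KObj.coeqπ f g :=
    KHom.ext' fun t => coequalizer.condition _ _
  have hL₀ := KObj.coeqIsColimit f g hw₀
  obtain ⟨e, heq⟩ : {e : E ≅ KObj.coeqObj f g // L ≫ e.hom = KObj.coeqπ f g} :=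
    ⟨hL.coconePointUniqueUpToIso hL₀,
      hL.comp_coconePointUniqueUpToIso_hom hL₀ WalkingParallelPair.one⟩
  have heq' : L = KObj.coeqπ f g ≫ e.inv := by
    rw [← heq, Category.assoc, e.hom_inv_id, Category.comp_id]
  have hhom : ∀ {A' B' : X} (t : Chain X A' B'),
      L.app t ≫ e.hom.app t = coequalizer.π (f.app t) (g.app t) := fun t =>
    KHom.congr_app heq t
  have hinv : ∀ {A' B' : X} (t : Chain X A' B'),
      coequalizer.π (f.app t) (g.app t) ≫ e.inv.app t = L.app t := fun t =>
    (KHom.congr_app heq' t).symm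
  have hei : e.hom.app r ≫ e.inv.app r = 𝟙 (E.F r) := KHom.congr_app e.hom_inv_id r
  refine Cofork.IsColimit.mk' _ fun c => ?_
  have hcc := c.condition
  refine ⟨e.hom.app r ≫ coequalizer.desc c.π hcc, ?_, ?_⟩
  · show L.app r ≫ e.hom.app r ≫ coequalizer.desc c.π hcc = c.π
    rw [← Category.assoc, hhom r, coequalizer.π_desc]
  · intro m hm
    replace hm : L.app r ≫ m = c.π := hm
    have h1 : e.inv.app r ≫ m = coequalizer.desc c.π hcc := by
      apply coequalizer.hom_ext
      rw [← Category.assoc, hinv r, hm, coequalizer.π_desc]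
    calc m = (e.hom.app r ≫ e.inv.app r) ≫ m := by rw [hei, Category.id_comp]
    _ = e.hom.app r ≫ e.inv.app r ≫ m := by rw [Category.assoc]
    _ = e.hom.app r ≫ coequalizer.desc c.π hcc := by rw [h1]

section Tensor

variable [MonoidalCategory M] [SymmetricCategory M] [MonoidalClosed M]

lemma tensorRight_preservesColimits (Z : M) : PreservesColimits (tensorRight Z) :=
  preservesColimits_of_natIso
    (NatIso.ofComponents (fun Y => β_ Z Y) (by intros; simp) :
      tensorLeft Z ≅ tensorRight Z)

/-- Tensor product of two split-pair coequalizers is a coequalizer. -/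
noncomputable def tensorIsColimit
    {A₁ B₁ Q₁ A₂ B₂ Q₂ : M}
    {f₁ g₁ : A₁ ⟶ B₁} (d₁ : B₁ ⟶ A₁) (hd₁f : d₁ ≫ f₁ = 𝟙 B₁) (hd₁g : d₁ ≫ g₁ = 𝟙 B₁)
    {f₂ g₂ : A₂ ⟶ B₂} (d₂ : B₂ ⟶ A₂) (hd₂f : d₂ ≫ f₂ = 𝟙 B₂) (hd₂g : d₂ ≫ g₂ = 𝟙 B₂)
    {q₁ : B₁ ⟶ Q₁} {hq₁ : f₁ ≫ q₁ = g₁ ≫ q₁} (hc₁ : IsColimit (Cofork.ofπ q₁ hq₁))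
    {q₂ : B₂ ⟶ Q₂} {hq₂ : f₂ ≫ q₂ = g₂ ≫ q₂} (hc₂ : IsColimit (Cofork.ofπ q₂ hq₂))
    (hqq : (f₁ ⊗ₘ f₂) ≫ (q₁ ⊗ₘ q₂) = (g₁ ⊗ₘ g₂) ≫ (q₁ ⊗ₘ q₂)) :
    IsColimit (Cofork.ofπ (q₁ ⊗ₘ q₂) hqq) := by
  haveI := tensorRight_preservesColimits (M := M) B₂
  haveI := tensorRight_preservesColimits (M := M) A₂
  haveI : PreservesColimits (tensorLeft Q₁) := inferInstance
  have w₁ : (f₁ ▷ B₂) ≫ (q₁ ▷ B₂) = (g₁ ▷ B₂) ≫ (q₁ ▷ B₂) := by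
    rw [← comp_whiskerRight, ← comp_whiskerRight, hq₁]
  have hR : IsColimit (Cofork.ofπ (q₁ ▷ B₂) w₁) :=
    isColimitCoforkMapOfIsColimit (tensorRight B₂) hq₁ hc₁
  have wA : (f₁ ▷ A₂) ≫ (q₁ ▷ A₂) = (g₁ ▷ A₂) ≫ (q₁ ▷ A₂) := by
    rw [← comp_whiskerRight, ← comp_whiskerRight, hq₁]
  have hA : IsColimit (Cofork.ofπ (q₁ ▷ A₂) wA) :=
    isColimitCoforkMapOfIsColimit (tensorRight A₂) hq₁ hc₁
  have w₂ : (Q₁ ◁ f₂) ≫ (Q₁ ◁ q₂) = (Q₁ ◁ g₂) ≫ (Q₁ ◁ q₂) := by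
    rw [← MonoidalCategory.whiskerLeft_comp, ← MonoidalCategory.whiskerLeft_comp, hq₂]
  have hLq : IsColimit (Cofork.ofπ (Q₁ ◁ q₂) w₂) :=
    isColimitCoforkMapOfIsColimit (tensorLeft Q₁) hq₂ hc₂
  refine Cofork.IsColimit.mk' _ fun s => ?_
  have hs := s.condition
  have e₁ : ∀ (f : A₁ ⟶ B₁), d₁ ≫ f = 𝟙 B₁ → ∀ (f' : A₂ ⟶ B₂),
      (d₁ ▷ A₂) ≫ (f ⊗ₘ f') = B₁ ◁ f' := by
    intro f hf f'
    rw [← tensorHom_id, tensorHom_comp_tensorHom, hf, Category.id_comp, id_tensorHom]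
  have e₂ : ∀ (f : A₁ ⟶ B₁) (f' : A₂ ⟶ B₂), d₂ ≫ f' = 𝟙 B₂ →
      (A₁ ◁ d₂) ≫ (f ⊗ₘ f') = f ▷ B₂ := by
    intro f f' hf'
    rw [← id_tensorHom, tensorHom_comp_tensorHom, hf', Category.id_comp, tensorHom_id]
  have cond1 : (f₁ ▷ B₂) ≫ s.π = (g₁ ▷ B₂) ≫ s.π := by
    rw [← e₂ f₁ f₂ hd₂f, ← e₂ g₁ g₂ hd₂g, Category.assoc, Category.assoc, hs]
  obtain ⟨h₁, hh₁⟩ : {h₁ : Q₁ ⊗ B₂ ⟶ s.pt // (q₁ ▷ B₂) ≫ h₁ = s.π} :=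
    ⟨_, Cofork.IsColimit.π_desc' hR s.π cond1⟩
  have midf : ∀ (f : A₂ ⟶ B₂), (q₁ ▷ A₂) ≫ (Q₁ ◁ f) ≫ h₁ = (B₁ ◁ f) ≫ s.π := by
    intro f
    rw [← Category.assoc, ← whisker_exchange, Category.assoc, hh₁]
  have cond2 : (Q₁ ◁ f₂) ≫ h₁ = (Q₁ ◁ g₂) ≫ h₁ := by
    apply Cofork.IsColimit.hom_ext hA
    rw [Cofork.π_ofπ, midf, midf, ← e₁ f₁ hd₁f f₂, ← e₁ g₁ hd₁g g₂,
      Category.assoc, Category.assoc, hs]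
  obtain ⟨h₂, hh₂⟩ : {h₂ : Q₁ ⊗ Q₂ ⟶ s.pt // (Q₁ ◁ q₂) ≫ h₂ = h₁} :=
    ⟨_, Cofork.IsColimit.π_desc' hLq h₁ cond2⟩
  refine ⟨h₂, ?_, ?_⟩
  · show (q₁ ⊗ₘ q₂) ≫ h₂ = s.π
    have htd : q₁ ⊗ₘ q₂ = (q₁ ▷ B₂) ≫ (Q₁ ◁ q₂) := tensorHom_def q₁ q₂
    rw [htd, Category.assoc, hh₂, hh₁]
  · intro m hm
    replace hm : (q₁ ⊗ₘ q₂) ≫ m = s.π := hm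
    apply Cofork.IsColimit.hom_ext hLq
    show (Q₁ ◁ q₂) ≫ m = (Q₁ ◁ q₂) ≫ h₂
    rw [hh₂]
    apply Cofork.IsColimit.hom_ext hR
    show (q₁ ▷ B₂) ≫ _ = (q₁ ▷ B₂) ≫ _
    have htd : q₁ ⊗ₘ q₂ = (q₁ ▷ B₂) ≫ (Q₁ ◁ q₂) := tensorHom_def q₁ q₂
    rw [← Category.assoc, ← htd, hm, hh₁]


end Tensor

end SplitPairAux

set_option maxHeartbeats 1000000

/-- **Coequalizers of `U`-split pairs of pre-Co-Segal categories.**  Let `M` be a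
cocomplete symmetric monoidal closed category, `σ₁, σ₂ : F ⇉ G` a parallel pair of
morphisms of `S`-diagrams in `M_S(X)`, and `L : U(G) ⟶ E` their coequalizer computed
levelwise in `K_X`.  If there is a splitting `p : U(G) ⟶ U(F)` with
`p ≫ U(σ₁) = p ≫ U(σ₂) = id`, then `E` carries a *unique* structure of `S`-diagram making
`L` a morphism of `S`-diagrams, and `L : G ⟶ E` is then the coequalizer of `(σ₁, σ₂)` in
`M_S(X)` (which is preserved by `U`). -/


theorem coequalizer_of_split_pair
    {M : Type u} [Category.{v} M] [MonoidalCategory M] [SymmetricCategory M]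
    [MonoidalClosed M] [HasColimits M] {X : Type w}
    {F G : SObj M X} (σ₁ σ₂ : F ⟶ G) {E : KObj M X}
    (L : (forgetLax M X).obj G ⟶ E)
    (hw : (forgetLax M X).map σ₁ ≫ L = (forgetLax M X).map σ₂ ≫ L)
    (hL : Nonempty (IsColimit (Cofork.ofπ L hw)))
    (p : (forgetLax M X).obj G ⟶ (forgetLax M X).obj F)
    (hp₁ : p ≫ (forgetLax M X).map σ₁ = 𝟙 _)
    (hp₂ : p ≫ (forgetLax M X).map σ₂ = 𝟙 _) :
    (∃! str : LaxExt M E, IsLaxCompat str L) ∧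
      ∀ (str : LaxExt M E) (hc : IsLaxCompat str L),
        ∃ w : σ₁ ≫ (show G ⟶ str.toSObj from ⟨L.app, L.naturality, hc⟩) =
            σ₂ ≫ (show G ⟶ str.toSObj from ⟨L.app, L.naturality, hc⟩),
          Nonempty (IsColimit
            (Cofork.ofπ (show G ⟶ str.toSObj from ⟨L.app, L.naturality, hc⟩) w)) := by
  obtain ⟨hLc⟩ := hL
  change KHom G.toKObj E at L
  change KHom G.toKObj F.toKObj at p
  -- levelwise data
  have hwr : ∀ {A B : X} (r : Chain X A B),
      σ₁.app r ≫ L.app r = σ₂.app r ≫ L.app r := fun r => KHom.congr_app hw r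
  have hp₁r : ∀ {A B : X} (r : Chain X A B), p.app r ≫ σ₁.app r = 𝟙 (G.F r) :=
    fun r => KHom.congr_app hp₁ r
  have hp₂r : ∀ {A B : X} (r : Chain X A B), p.app r ≫ σ₂.app r = 𝟙 (G.F r) :=
    fun r => KHom.congr_app hp₂ r
  have Lnat : ∀ {A B : X} {t s : Chain X A B} (u : ChainHom t s),
      G.map u ≫ L.app t = L.app s ≫ E.map u := fun u => L.naturality u
  -- the coequalizer is computed levelwise
  have hlev : ∀ {A B : X} (r : Chain X A B),
      IsColimit (Cofork.ofπ (L.app r) (hwr r)) := fun r =>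
    KObj.levelwiseIsColimit hLc r (hwr r)
  -- tensor squares of the levelwise coequalizers
  have hTw : ∀ {A B C : X} (s : Chain X A B) (t : Chain X B C),
      (σ₁.app s ⊗ₘ σ₁.app t) ≫ (L.app s ⊗ₘ L.app t) =
        (σ₂.app s ⊗ₘ σ₂.app t) ≫ (L.app s ⊗ₘ L.app t) := by
    intro A B C s t
    rw [tensorHom_comp_tensorHom, tensorHom_comp_tensorHom, hwr s, hwr t]
  have hT : ∀ {A B C : X} (s : Chain X A B) (t : Chain X B C),
      IsColimit (Cofork.ofπ (L.app s ⊗ₘ L.app t) (hTw s t)) := fun s t =>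
    tensorIsColimit (p.app s) (hp₁r s) (hp₂r s) (p.app t) (hp₁r t) (hp₂r t)
      (hlev s) (hlev t) (hTw s t)
  have canc2 : ∀ {A B C : X} (s : Chain X A B) (t : Chain X B C) {Z : M}
      {a b : E.F s ⊗ E.F t ⟶ Z},
      (L.app s ⊗ₘ L.app t) ≫ a = (L.app s ⊗ₘ L.app t) ≫ b → a = b := by
    intro A B C s t Z a b h
    exact Cofork.IsColimit.hom_ext (hT s t) h
  -- triple tensors
  have hsplit2 : ∀ {A B C : X} (s : Chain X A B) (t : Chain X B C),
      ((p.app s ⊗ₘ p.app t) ≫ (σ₁.app s ⊗ₘ σ₁.app t) = 𝟙 (G.F s ⊗ G.F t)) ∧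
        ((p.app s ⊗ₘ p.app t) ≫ (σ₂.app s ⊗ₘ σ₂.app t) = 𝟙 (G.F s ⊗ G.F t)) := by
    intro A B C s t
    constructor
    · rw [tensorHom_comp_tensorHom, hp₁r s, hp₁r t]
      exact id_tensorHom_id _ _
    · rw [tensorHom_comp_tensorHom, hp₂r s, hp₂r t]
      exact id_tensorHom_id _ _
  have hT3w : ∀ {A B C D : X} (s : Chain X A B) (t : Chain X B C) (r : Chain X C D),
      ((σ₁.app s ⊗ₘ σ₁.app t) ⊗ₘ σ₁.app r) ≫ ((L.app s ⊗ₘ L.app t) ⊗ₘ L.app r) =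
        ((σ₂.app s ⊗ₘ σ₂.app t) ⊗ₘ σ₂.app r) ≫ ((L.app s ⊗ₘ L.app t) ⊗ₘ L.app r) := by
    intro A B C D s t r
    rw [tensorHom_comp_tensorHom, hTw s t, hwr r, ← tensorHom_comp_tensorHom]
  have hT3 : ∀ {A B C D : X} (s : Chain X A B) (t : Chain X B C) (r : Chain X C D),
      IsColimit (Cofork.ofπ ((L.app s ⊗ₘ L.app t) ⊗ₘ L.app r) (hT3w s t r)) := fun s t r =>
    tensorIsColimit (p.app s ⊗ₘ p.app t) (hsplit2 s t).1 (hsplit2 s t).2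
      (p.app r) (hp₁r r) (hp₂r r) (hT s t) (hlev r) (hT3w s t r)
  have canc3 : ∀ {A B C D : X} (s : Chain X A B) (t : Chain X B C) (r : Chain X C D)
      {Z : M} {a b : (E.F s ⊗ E.F t) ⊗ E.F r ⟶ Z},
      ((L.app s ⊗ₘ L.app t) ⊗ₘ L.app r) ≫ a = ((L.app s ⊗ₘ L.app t) ⊗ₘ L.app r) ≫ b →
        a = b := by
    intro A B C D s t r Z a b h
    exact Cofork.IsColimit.hom_ext (hT3 s t r) h
  -- construction of the laxity maps on `E`
  have laxcond : ∀ {A B C : X} (s : Chain X A B) (t : Chain X B C),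
      (σ₁.app s ⊗ₘ σ₁.app t) ≫ (G.lax s t ≫ L.app (s.comp t)) =
        (σ₂.app s ⊗ₘ σ₂.app t) ≫ (G.lax s t ≫ L.app (s.comp t)) := by
    intro A B C s t
    rw [← Category.assoc, ← Category.assoc, σ₁.monoidal s t, σ₂.monoidal s t,
      Category.assoc, Category.assoc, hwr (s.comp t)]
  have laxdef : ∀ {A B C : X} (s : Chain X A B) (t : Chain X B C),
      {l : E.F s ⊗ E.F t ⟶ E.F (s.comp t) //
        (L.app s ⊗ₘ L.app t) ≫ l = G.lax s t ≫ L.app (s.comp t)} := fun s t =>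
    ⟨_, Cofork.IsColimit.π_desc' (hT s t) _ (laxcond s t)⟩
  -- naturality of the laxity maps
  have str₀natural : ∀ {A B C : X} {s s' : Chain X A B} {t t' : Chain X B C}
      (u : ChainHom s s') (w : ChainHom t t'),
      (E.map u ⊗ₘ E.map w) ≫ (laxdef s t).1 =
        (laxdef s' t').1 ≫ E.map (u.hcomp w) := by
    intro A B C s s' t t' u w
    apply canc2 s' t'
    calc (L.app s' ⊗ₘ L.app t') ≫ (E.map u ⊗ₘ E.map w) ≫ (laxdef s t).1
        = ((L.app s' ≫ E.map u) ⊗ₘ (L.app t' ≫ E.map w)) ≫ (laxdef s t).1 := by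
          rw [← Category.assoc, tensorHom_comp_tensorHom]
      _ = ((G.map u ≫ L.app s) ⊗ₘ (G.map w ≫ L.app t)) ≫ (laxdef s t).1 := by
          rw [← Lnat u, ← Lnat w]
      _ = (G.map u ⊗ₘ G.map w) ≫ (L.app s ⊗ₘ L.app t) ≫ (laxdef s t).1 := by
          rw [← tensorHom_comp_tensorHom, Category.assoc]
      _ = (G.map u ⊗ₘ G.map w) ≫ G.lax s t ≫ L.app (s.comp t) := by
          rw [(laxdef s t).2]
      _ = (G.lax s' t' ≫ G.map (u.hcomp w)) ≫ L.app (s.comp t) := by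
          rw [← Category.assoc, G.lax_natural u w]
      _ = G.lax s' t' ≫ L.app (s'.comp t') ≫ E.map (u.hcomp w) := by
          rw [Category.assoc, Lnat (u.hcomp w)]
      _ = (L.app s' ⊗ₘ L.app t') ≫ (laxdef s' t').1 ≫ E.map (u.hcomp w) := by
          conv_rhs => rw [← Category.assoc, (laxdef s' t').2]
          rw [Category.assoc]
  -- associativity of the laxity maps
  have str₀assoc : ∀ {A B C D : X} (s : Chain X A B) (t : Chain X B C) (r : Chain X C D),
      ((laxdef s t).1 ▷ E.F r) ≫ (laxdef (s.comp t) r).1 =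
        (α_ (E.F s) (E.F t) (E.F r)).hom ≫ (E.F s ◁ (laxdef t r).1) ≫
          (laxdef s (t.comp r)).1 ≫ eqToHom (by rw [Chain.comp_assoc]) := by
    intro A B C D s t r
    apply canc3 s t r
    have ex0 : ((L.app s ⊗ₘ L.app t) ⊗ₘ L.app r) ≫ ((laxdef s t).1 ▷ E.F r) =
        (G.lax s t ▷ G.F r) ≫ (L.app (s.comp t) ⊗ₘ L.app r) := by
      rw [← tensorHom_id ((laxdef s t).1), ← tensorHom_id (G.lax s t), tensorHom_comp_tensorHom,
        tensorHom_comp_tensorHom, Category.comp_id, Category.id_comp, (laxdef s t).2]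
    have ex1 : (L.app s ⊗ₘ (L.app t ⊗ₘ L.app r)) ≫ (E.F s ◁ (laxdef t r).1) =
        (G.F s ◁ G.lax t r) ≫ (L.app s ⊗ₘ L.app (t.comp r)) := by
      rw [← id_tensorHom (E.F s), ← id_tensorHom (G.F s), tensorHom_comp_tensorHom, tensorHom_comp_tensorHom,
        Category.comp_id, Category.id_comp, (laxdef t r).2]
    have hLHS : ((L.app s ⊗ₘ L.app t) ⊗ₘ L.app r) ≫
        ((laxdef s t).1 ▷ E.F r) ≫ (laxdef (s.comp t) r).1 =
        (G.lax s t ▷ G.F r) ≫ G.lax (s.comp t) r ≫ L.app ((s.comp t).comp r) := by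
      rw [reassoc_of% ex0, (laxdef (s.comp t) r).2]
    have hRHS : ((L.app s ⊗ₘ L.app t) ⊗ₘ L.app r) ≫
        (α_ (E.F s) (E.F t) (E.F r)).hom ≫ (E.F s ◁ (laxdef t r).1) ≫
          (laxdef s (t.comp r)).1 ≫ eqToHom (by rw [Chain.comp_assoc]) =
        (α_ (G.F s) (G.F t) (G.F r)).hom ≫ (G.F s ◁ G.lax t r) ≫
          G.lax s (t.comp r) ≫
          eqToHom (show G.F (s.comp (t.comp r)) = G.F ((s.comp t).comp r) by
            rw [Chain.comp_assoc]) ≫ L.app ((s.comp t).comp r) := by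
      rw [← Category.assoc, associator_naturality, Category.assoc, reassoc_of% ex1,
        reassoc_of% (laxdef s (t.comp r)).2,
        KHom.app_eqToHom L (Chain.comp_assoc s t r).symm]
    rw [hLHS, hRHS, reassoc_of% (G.lax_assoc s t r)]
  -- the S-diagram structure on `E`
  refine ⟨⟨⟨fun {A B C} s t => (laxdef s t).1, str₀natural, str₀assoc⟩,
      fun s t => (laxdef s t).2, ?_⟩, ?_⟩
  · -- uniqueness of the structure
    intro str' hc'
    apply LaxExt.ext_lax
    intro A B C s t
    apply canc2 s t
    exact (hc' s t).trans (laxdef s t).2.symm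
  · -- the coequalizer in `M_S(X)`
    intro str hc
    refine ⟨SHom.ext' fun t => hwr t, ⟨?_⟩⟩
    refine Cofork.IsColimit.mk' _ fun c => ?_
    have kcond : (forgetLax M X).map σ₁ ≫ (forgetLax M X).map c.π =
        (forgetLax M X).map σ₂ ≫ (forgetLax M X).map c.π := by
      rw [← Functor.map_comp, ← Functor.map_comp, c.condition]
    obtain ⟨kd, hkd⟩ : {d : E ⟶ (forgetLax M X).obj c.pt //
        L ≫ d = (forgetLax M X).map c.π} :=
      ⟨_, Cofork.IsColimit.π_desc' hLc _ kcond⟩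
    change KHom E c.pt.toKObj at kd
    have hkdr : ∀ {A B : X} (r : Chain X A B),
        L.app r ≫ kd.app r = (c.π).app r := fun r => KHom.congr_app hkd r
    have kdmon : ∀ {A B C : X} (s : Chain X A B) (t : Chain X B C),
        (kd.app s ⊗ₘ kd.app t) ≫ (c.pt).lax s t =
          str.lax s t ≫ kd.app (s.comp t) := by
      intro A B C s t
      apply canc2 s t
      calc (L.app s ⊗ₘ L.app t) ≫ (kd.app s ⊗ₘ kd.app t) ≫ (c.pt).lax s t
          = ((L.app s ≫ kd.app s) ⊗ₘ (L.app t ≫ kd.app t)) ≫ (c.pt).lax s t := by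
            rw [← Category.assoc, tensorHom_comp_tensorHom]
        _ = ((c.π).app s ⊗ₘ (c.π).app t) ≫ (c.pt).lax s t := by
            rw [hkdr s, hkdr t]
        _ = G.lax s t ≫ (c.π).app (s.comp t) := (c.π).monoidal s t
        _ = G.lax s t ≫ L.app (s.comp t) ≫ kd.app (s.comp t) := by
            rw [hkdr (s.comp t)]
        _ = ((L.app s ⊗ₘ L.app t) ≫ str.lax s t) ≫ kd.app (s.comp t) := by
            exact (Category.assoc _ _ _).symm.trans
              (congrArg (· ≫ kd.app (s.comp t)) (hc s t).symm)
        _ = (L.app s ⊗ₘ L.app t) ≫ str.lax s t ≫ kd.app (s.comp t) := by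
            rw [Category.assoc]
    refine ⟨⟨kd.app, kd.naturality, kdmon⟩, ?_, ?_⟩
    · exact SHom.ext' fun t => hkdr t
    · intro m hm
      replace hm : ∀ {A B : X} (t : Chain X A B),
          L.app t ≫ m.app t = (c.π).app t := fun t => SHom.congr_app hm t
      have hmk : (⟨m.app, m.naturality⟩ : E ⟶ (forgetLax M X).obj c.pt) = kd := by
        apply Cofork.IsColimit.hom_ext hLc
        show L ≫ _ = L ≫ (show E ⟶ (forgetLax M X).obj c.pt from kd)
        rw [hkd]
        exact KHom.ext' fun t => hm t
      exact SHom.ext' fun t => KHom.congr_app hmk t
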